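/- arXiv:1906.02187 — 4 statements merged into one kernel-verified Lean document; each statement's English description precedes it below -/
import Mathlib

section
/- Let J : ℝ³ → ℂ³ be essentially bounded with compact support and let h ∈ ℝ³ be fixed, with J_h(y) := J(y + h). Then for every wavenumber k > 0 and every unit vector x̂ ∈ ℝ³ the phaseless far field data is translation invariant: ‖E^∞(x̂, k; J_h)‖ = ‖E^∞(x̂, k; J)‖, where ‖·‖ denotes the Euclidean norm on ℂ³. -/
open MeasureTheory Complex

noncomputable section

abbrev R3 := EuclideanSpace ℝ (Fin 3)
abbrev C3 := EuclideanSpace ℂ (Fin 3)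

/-- The complex component of a ℂ³-vector in a real direction `e`. -/
def dotC (e : R3) (w : C3) : ℂ := ∑ i, (e i : ℂ) * w i

/-- The complexification of a real vector. -/
def cplx (x : R3) : C3 := (WithLp.equiv 2 (Fin 3 → ℂ)).symm fun i => (x i : ℂ)

/-- The electric far field pattern `E^∞(x̂, k; J) = iωμ (v − (x̂·v) x̂)`,
where `ω = k/√(εμ)` and `v = ∫ exp(−ik x̂·y) J(y) dy`. -/
def farField (ε μ k : ℝ) (J : R3 → C3) (x : R3) : C3 :=
  (Complex.I * ((k / Real.sqrt (ε * μ) : ℝ) : ℂ) * (μ : ℂ)) •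
    ((∫ y, Complex.exp (-Complex.I * (k : ℂ) * ((inner ℝ x y : ℝ) : ℂ)) • J y) -
      (dotC x (∫ y, Complex.exp (-Complex.I * (k : ℂ) * ((inner ℝ x y : ℝ) : ℂ)) • J y)) • cplx x)

lemma dotC_smul (e : R3) (c : ℂ) (w : C3) : dotC e (c • w) = c * dotC e w := by
  simp [dotC, Finset.mul_sum]
  congr 1; ext i; ring

/-- The phaseless far field data is invariant under translation of the source. -/
theorem phaseless_translation_invariance (ε μ : ℝ) (hε : 0 < ε) (hμ : 0 < μ)
    (J : R3 → C3) (hJb : MemLp J ⊤ volume) (hJc : HasCompactSupport J)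
    (h : R3) (k : ℝ) (hk : 0 < k) (xhat : R3) (hxh : ‖xhat‖ = 1) :
    ‖farField ε μ k (fun y => J (y + h)) xhat‖ = ‖farField ε μ k J xhat‖ := by
  set c : ℂ := Complex.exp (Complex.I * (k : ℂ) * ((inner ℝ xhat h : ℝ) : ℂ)) with hc
  have hcv : ∀ y : R3, Complex.exp (-Complex.I * (k:ℂ) * ((inner ℝ xhat (y - h) : ℝ) : ℂ)) =
      c * Complex.exp (-Complex.I * (k:ℂ) * ((inner ℝ xhat y : ℝ):ℂ)) := by
    intro y
    rw [hc, ← Complex.exp_add]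
    congr 1
    have : (inner ℝ xhat (y - h) : ℝ) = (inner ℝ xhat y : ℝ) - (inner ℝ xhat h : ℝ) :=
      inner_sub_right _ _ _
    rw [this]
    push_cast
    ring
  have hint : (∫ y, Complex.exp (-Complex.I * (k:ℂ) * ((inner ℝ xhat y : ℝ):ℂ)) • J (y + h))
      = c • (∫ y, Complex.exp (-Complex.I * (k:ℂ) * ((inner ℝ xhat y : ℝ):ℂ)) • J y) := by
    have key := MeasureTheory.integral_add_right_eq_self (μ := volume)
      (fun y : R3 => Complex.exp (-Complex.I * (k:ℂ) * ((inner ℝ xhat (y - h) : ℝ):ℂ)) • J y) h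
    simp only [add_sub_cancel_right] at key
    calc (∫ y, Complex.exp (-Complex.I * (k:ℂ) * ((inner ℝ xhat y : ℝ):ℂ)) • J (y + h))
        = ∫ y, Complex.exp (-Complex.I * (k:ℂ) * ((inner ℝ xhat (y - h) : ℝ):ℂ)) • J y := key
      _ = ∫ y, c • (Complex.exp (-Complex.I * (k:ℂ) * ((inner ℝ xhat y : ℝ):ℂ)) • J y) := by
          simp_rw [hcv, mul_smul]
      _ = c • (∫ y, Complex.exp (-Complex.I * (k:ℂ) * ((inner ℝ xhat y : ℝ):ℂ)) • J y) :=
          integral_smul c _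
  have hcnorm : ‖c‖ = 1 := by
    rw [hc, Complex.norm_exp]
    simp
  rw [farField, farField, hint, dotC_smul]
  simp only [mul_smul, ← smul_sub, norm_smul, hcnorm, one_mul]

end
end

section
/- Let J : ℝ³ → ℂ³ be essentially bounded with compact support, let (x̂₀, l, m) be an orthonormal basis of ℝ³, and let e ∈ {l, m}. Then for every k > 0, e · E^∞(x̂₀, k; J) = iωμ ∫_ℝ exp(i k α) Ĵ_e(α) dα, where Ĵ_e(α) := ∫_{ℝ²} e · J(−α x̂₀ + s l + t m) ds dt. -/
open MeasureTheory Complex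

noncomputable section

/-- `Ĵ_e(α)`: the integral of `e·J` over the hyperplane `{y : y·x̂₀ + α = 0}`,
parametrized as `y = −α x̂₀ + s l + t m`. -/
def sliceProj (J : R3 → C3) (xhat l m e : R3) (α : ℝ) : ℂ :=
  ∫ st : ℝ × ℝ, dotC e (J (-α • xhat + st.1 • l + st.2 • m))

lemma dotC_eq_inner (e : R3) (w : C3) : dotC e w = inner ℂ (cplx e) w := by
  simp [dotC, cplx, PiLp.inner_apply, mul_comm]

lemma dotC_cplx (e x : R3) : dotC e (cplx x) = ((inner ℝ e x : ℝ) : ℂ) := by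
  simp [dotC, cplx, PiLp.inner_apply, mul_comm]

set_option maxHeartbeats 1000000 in
/-- The far field component in a tangential direction `e` is `iωμ` times the
one-dimensional inverse Fourier transform of the slice projections `Ĵ_e`. -/
theorem farField_component_eq_fourier (ε μ : ℝ) (hε : 0 < ε) (hμ : 0 < μ)
    (J : R3 → C3) (hJb : MemLp J ⊤ volume) (hJc : HasCompactSupport J)
    (xhat l m : R3) (hxh : ‖xhat‖ = 1) (hl : ‖l‖ = 1) (hm : ‖m‖ = 1)
    (hxl : (inner ℝ xhat l : ℝ) = 0) (hxm : (inner ℝ xhat m : ℝ) = 0)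
    (hlm : (inner ℝ l m : ℝ) = 0)
    (e : R3) (he : e = l ∨ e = m) (k : ℝ) (hk : 0 < k) :
    dotC e (farField ε μ k J xhat) =
      Complex.I * ((k / Real.sqrt (ε * μ) : ℝ) : ℂ) * (μ : ℂ) *
        ∫ α : ℝ, Complex.exp (Complex.I * (k : ℂ) * (α : ℂ)) * sliceProj J xhat l m e α := by
  set c : ℂ := Complex.I * ((k / Real.sqrt (ε * μ) : ℝ) : ℂ) * (μ : ℂ) with hc
  -- orthogonality of e and xhat
  have hex : (inner ℝ e xhat : ℝ) = 0 := by
    rcases he with rfl | rfl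
    · rw [real_inner_comm]; exact hxl
    · rw [real_inner_comm]; exact hxm
  -- the linear functional w ↦ dotC e w
  set L : C3 →L[ℂ] ℂ := innerSL ℂ (cplx e) with hL
  have hLd : ∀ w : C3, dotC e w = L w := fun w => dotC_eq_inner e w
  -- integrability of J
  have hJint : Integrable J volume :=
    memLp_one_iff_integrable.mp <|
      hJb.mono_exponent_of_measure_support_ne_top
        (fun x => image_eq_zero_of_notMem_tsupport) hJc.measure_lt_top.ne le_top
  -- the phase function
  set ph : R3 → ℂ := fun y => Complex.exp (-Complex.I * (k : ℂ) * ((inner ℝ xhat y : ℝ) : ℂ))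
    with hph
  have hph_cont : Continuous ph := by
    apply Complex.continuous_exp.comp
    exact (continuous_const.mul (Complex.continuous_ofReal.comp
      (continuous_const.inner continuous_id')))
  have hph_mem : MemLp ph ⊤ volume := by
    apply memLp_top_of_bound hph_cont.aestronglyMeasurable 1
    filter_upwards with y
    simp only [hph, Complex.norm_exp]
    have : (-Complex.I * (k : ℂ) * ((inner ℝ xhat y : ℝ) : ℂ)).re = 0 := by simp
    rw [this, Real.exp_zero]
  have hFint : Integrable (fun y => ph y • J y) volume := hJint.smul_of_top_right hph_mem
  -- the scalar integrand
  set G : R3 → ℂ := fun y => ph y * dotC e (J y) with hG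
  have hGint : Integrable G volume := by
    have := L.integrable_comp hFint
    have heq : (fun y => L (ph y • J y)) = G := by
      funext y; simp [hG, hLd, _root_.map_smul, smul_eq_mul]
    rwa [heq] at this
  -- component of the far field
  have hLxhat : L (cplx xhat) = 0 := by rw [← hLd, dotC_cplx, hex]; simp
  have hLV : L (∫ y, ph y • J y) = ∫ y, G y := by
    rw [← ContinuousLinearMap.integral_comp_comm L hFint]
    refine integral_congr_ae (Filter.Eventually.of_forall fun y => ?_)
    simp [hG, hLd, smul_eq_mul]
  have hstep1 : dotC e (farField ε μ k J xhat) = c * ∫ y, G y := by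
    have h0 : dotC e (farField ε μ k J xhat)
        = dotC e (c • ((∫ y, ph y • J y) - dotC xhat (∫ y, ph y • J y) • cplx xhat)) := rfl
    rw [h0, hLd, _root_.map_smul, map_sub, _root_.map_smul, hLxhat, smul_zero, sub_zero,
      smul_eq_mul, hLV]
  -- orthonormal basis from (-xhat, l, m)
  have hon : Orthonormal ℝ ![-xhat, l, m] := by
    constructor
    · intro i; fin_cases i <;> simp [hxh, hl, hm]
    · intro i j hij
      fin_cases i <;> fin_cases j <;>
        simp_all [inner_neg_left, inner_neg_right, real_inner_comm l xhat,
          real_inner_comm m xhat, real_inner_comm m l]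
  have hcard : Fintype.card (Fin 3) = Module.finrank ℝ R3 := by simp
  set bas := basisOfLinearIndependentOfCardEqFinrank hon.linearIndependent hcard with hbasdef
  have hbas : ⇑bas = ![-xhat, l, m] := coe_basisOfLinearIndependentOfCardEqFinrank _ _
  set b : OrthonormalBasis (Fin 3) ℝ R3 := bas.toOrthonormalBasis (by rwa [hbas]) with hbdef
  have hb : ⇑b = ![-xhat, l, m] := by rw [hbdef, Module.Basis.coe_toOrthonormalBasis, hbas]
  -- the measurable equivalence chain
  set e₁ : (ℝ × ℝ × ℝ) ≃ᵐ (ℝ × (Fin 2 → ℝ)) :=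
    (MeasurableEquiv.refl ℝ).prodCongr (MeasurableEquiv.finTwoArrow).symm with he₁
  set e₂ : (ℝ × (Fin 2 → ℝ)) ≃ᵐ (Fin 3 → ℝ) :=
    (MeasurableEquiv.piFinSuccAbove (fun _ : Fin 3 => ℝ) 0).symm with he₂
  set e₃ : (Fin 3 → ℝ) ≃ᵐ R3 := MeasurableEquiv.toLp 2 (Fin 3 → ℝ) with he₃
  set e₄ : R3 ≃ᵐ R3 := b.measurableEquiv.symm with he₄
  set Ψ : (ℝ × ℝ × ℝ) ≃ᵐ R3 := e₁.trans (e₂.trans (e₃.trans e₄)) with hΨdef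
  have h₁ : MeasurePreserving e₁ volume volume :=
    (MeasurePreserving.id volume).prod ((measurePreserving_finTwoArrow volume).symm _)
  have h₂ : MeasurePreserving e₂ volume volume :=
    (volume_preserving_piFinSuccAbove (fun _ : Fin 3 => ℝ) 0).symm _
  have h₃ : MeasurePreserving e₃ volume volume :=
    (EuclideanSpace.volume_preserving_symm_measurableEquiv_toLp (Fin 3)).symm _
  have h₄ : MeasurePreserving e₄ volume volume := b.measurePreserving_measurableEquiv.symm _
  have hΨ : MeasurePreserving Ψ volume volume := (h₄.comp (h₃.comp h₂)).comp h₁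
  -- evaluation of Ψ
  have hΨeval : ∀ w : ℝ × ℝ × ℝ, Ψ w = w.1 • (-xhat) + w.2.1 • l + w.2.2 • m := by
    intro w
    have hcoords : (e₃ (e₂ (e₁ w)) : Fin 3 → ℝ) = ![w.1, w.2.1, w.2.2] := by
      funext i
      fin_cases i <;>
        simp [he₁, he₂, he₃, MeasurableEquiv.piFinSuccAbove, MeasurableEquiv.toLp,
          MeasurableEquiv.finTwoArrow, Fin.insertNth_zero, MeasurableEquiv.prodCongr,
          MeasurableEquiv.piFinTwo, piFinTwoEquiv, Equiv.prodCongr] <;> rfl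
    have h4 : Ψ w = b.repr.symm (e₃ (e₂ (e₁ w))) := rfl
    rw [h4, ← b.sum_repr_symm]
    have : ∀ i, (e₃ (e₂ (e₁ w)) : EuclideanSpace ℝ (Fin 3)) i = ![w.1, w.2.1, w.2.2] i :=
      fun i => congrFun hcoords i
    simp [Fin.sum_univ_three, this, hb]
  -- inner product with xhat along the slice
  have hinner : ∀ w : ℝ × ℝ × ℝ, (inner ℝ xhat (Ψ w) : ℝ) = -w.1 := by
    intro w
    rw [hΨeval w]
    have h1 : (inner ℝ xhat xhat : ℝ) = 1 := by
      rw [real_inner_self_eq_norm_mul_norm, hxh]; ring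
    rw [inner_add_right, inner_add_right, real_inner_smul_right, real_inner_smul_right,
      real_inner_smul_right, inner_neg_right, h1, hxl, hxm]
    ring
  -- change of variables
  have hΨint : ∫ y, G y = ∫ w : ℝ × ℝ × ℝ, G (Ψ w) :=
    (hΨ.integral_comp Ψ.measurableEmbedding G).symm
  set G3 : ℝ × ℝ × ℝ → ℂ := fun w =>
    Complex.exp (Complex.I * (k : ℂ) * (w.1 : ℂ)) *
      dotC e (J (-w.1 • xhat + w.2.1 • l + w.2.2 • m)) with hG3
  have hGΨeq : (G ∘ ⇑Ψ) = G3 := by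
    funext w
    have hpt : Ψ w = -w.1 • xhat + w.2.1 • l + w.2.2 • m := by
      rw [hΨeval w]; module
    have hph_val : ph (Ψ w) = Complex.exp (Complex.I * (k : ℂ) * (w.1 : ℂ)) := by
      simp only [hph]
      rw [hinner w]
      congr 1
      push_cast
      ring
    show G (Ψ w) = G3 w
    simp only [hG, hG3]
    rw [hph_val, hpt]
  have hG3int : Integrable G3 volume := by
    rw [← hGΨeq]
    exact (hΨ.integrable_comp_emb Ψ.measurableEmbedding).mpr hGint
  have hfub : ∫ w : ℝ × ℝ × ℝ, G3 w =
      ∫ α : ℝ, ∫ st : ℝ × ℝ, G3 (α, st) := by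
    rw [Measure.volume_eq_prod] at hG3int ⊢
    exact integral_prod _ hG3int
  have hΨcomp : ∫ w : ℝ × ℝ × ℝ, G (Ψ w) = ∫ w : ℝ × ℝ × ℝ, G3 w := by
    refine integral_congr_ae (Filter.Eventually.of_forall fun w => ?_)
    exact congrFun hGΨeq w
  rw [hstep1, hΨint, hΨcomp, hfub]
  congr 1
  refine integral_congr_ae (Filter.Eventually.of_forall fun α => ?_)
  show (∫ st : ℝ × ℝ, G3 (α, st))
      = Complex.exp (Complex.I * (k : ℂ) * (α : ℂ)) * sliceProj J xhat l m e α
  rw [sliceProj, ← integral_const_mul]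

end
end

section
/- Define J₁, J₂ : ℝ³ → ℂ³ by: J₁(y) = (1,0,0)ᵀ if y₁ ∈ (−1,1), y₂ ∈ (−2,−1] ∪ [1,2), y₃ ∈ (−1,1); J₁(y) = (y₁,0,0)ᵀ if y ∈ (−1,1)³; J₁(y) = 0 otherwise; and J₂(y) = (1,0,0)ᵀ if y₁ ∈ (−1,1), y₂ ∈ (−2,−1] ∪ [1,2), y₃ ∈ (−1,1); J₂(y) = 0 otherwise. Let x̂₀ = (0,1,0)ᵀ. Then for every wavenumber k > 0, E^∞(x̂₀, k; J₁) = E^∞(x̂₀, k; J₂); in particular e · E^∞(x̂₀, k; J₁) = e · E^∞(x̂₀, k; J₂) for every unit vector e with e·x̂₀ = 0, even though J₁ ≠ J₂. -/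
open MeasureTheory Complex

noncomputable section

open scoped Classical in
/-- The source `J₁` of the counterexample. -/
def Jone : R3 → C3 := fun y =>
  if y 0 ∈ Set.Ioo (-1 : ℝ) 1 ∧ (y 1 ∈ Set.Ioc (-2 : ℝ) (-1) ∨ y 1 ∈ Set.Ico (1 : ℝ) 2) ∧
      y 2 ∈ Set.Ioo (-1 : ℝ) 1 then
    cplx (EuclideanSpace.single 0 1)
  else if y 0 ∈ Set.Ioo (-1 : ℝ) 1 ∧ y 1 ∈ Set.Ioo (-1 : ℝ) 1 ∧ y 2 ∈ Set.Ioo (-1 : ℝ) 1 then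
    ((y 0 : ℂ)) • cplx (EuclideanSpace.single 0 1)
  else 0

open scoped Classical in
/-- The source `J₂` of the counterexample. -/
def Jtwo : R3 → C3 := fun y =>
  if y 0 ∈ Set.Ioo (-1 : ℝ) 1 ∧ (y 1 ∈ Set.Ioc (-2 : ℝ) (-1) ∨ y 1 ∈ Set.Ico (1 : ℝ) 2) ∧
      y 2 ∈ Set.Ioo (-1 : ℝ) 1 then
    cplx (EuclideanSpace.single 0 1)
  else 0

/-! ### Auxiliary material -/

open scoped Classical

/-- first factor of the difference -/
def f0 : ℝ → ℂ := fun t => if t ∈ Set.Ioo (-1 : ℝ) 1 then (t : ℂ) else 0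

/-- second factor of the difference -/
def f1 (k : ℝ) : ℝ → ℂ := fun t =>
  if t ∈ Set.Ioo (-1 : ℝ) 1 then Complex.exp (-Complex.I * (k : ℂ) * (t : ℂ)) else 0

/-- third factor of the difference -/
def f2 : ℝ → ℂ := fun t => if t ∈ Set.Ioo (-1 : ℝ) 1 then 1 else 0

/-- the scalar difference function -/
def dfun (k : ℝ) : R3 → ℂ := fun y => f0 (y 0) * f1 k (y 1) * f2 (y 2)

/-- the common scalar coefficient -/
def c2fun (k : ℝ) : R3 → ℂ := fun y =>
  if y 0 ∈ Set.Ioo (-1 : ℝ) 1 ∧ (y 1 ∈ Set.Ioc (-2 : ℝ) (-1) ∨ y 1 ∈ Set.Ico (1 : ℝ) 2) ∧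
      y 2 ∈ Set.Ioo (-1 : ℝ) 1 then Complex.exp (-Complex.I * (k : ℂ) * ((y 1 : ℝ) : ℂ))
  else 0

lemma inner_single_one (y : R3) : (inner ℝ (EuclideanSpace.single 1 (1 : ℝ) : R3) y : ℝ) = y 1 := by
  simp [PiLp.inner_apply, EuclideanSpace.single_apply]

lemma not_mem_Ioo_of_cond {t : ℝ} (h : t ∈ Set.Ioc (-2 : ℝ) (-1) ∨ t ∈ Set.Ico (1 : ℝ) 2) :
    t ∉ Set.Ioo (-1 : ℝ) 1 := by
  rcases h with h | h
  · exact fun hm => absurd h.2 (not_le.mpr hm.1)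
  · exact fun hm => absurd h.1 (not_le.mpr hm.2)

lemma pt1 (k : ℝ) (y : R3) :
    Complex.exp (-Complex.I * (k : ℂ) * ((y 1 : ℝ) : ℂ)) • Jone y =
      (c2fun k y + dfun k y) • cplx (EuclideanSpace.single 0 1) := by
  unfold Jone c2fun dfun f0 f1 f2
  by_cases hP : y 0 ∈ Set.Ioo (-1 : ℝ) 1 ∧
      (y 1 ∈ Set.Ioc (-2 : ℝ) (-1) ∨ y 1 ∈ Set.Ico (1 : ℝ) 2) ∧ y 2 ∈ Set.Ioo (-1 : ℝ) 1
  · have h1 : y 1 ∉ Set.Ioo (-1 : ℝ) 1 := not_mem_Ioo_of_cond hP.2.1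
    rw [if_pos hP, if_pos hP, if_neg h1]
    simp
  · rw [if_neg hP, if_neg hP]
    by_cases hC : y 0 ∈ Set.Ioo (-1 : ℝ) 1 ∧ y 1 ∈ Set.Ioo (-1 : ℝ) 1 ∧ y 2 ∈ Set.Ioo (-1 : ℝ) 1
    · rw [if_pos hC, if_pos hC.1, if_pos hC.2.1, if_pos hC.2.2, smul_smul]
      rw [mul_one, mul_comm]
      simp
    · rw [if_neg hC, smul_zero]
      have : (if y 0 ∈ Set.Ioo (-1 : ℝ) 1 then ((y 0 : ℝ) : ℂ) else 0) *
          (if y 1 ∈ Set.Ioo (-1 : ℝ) 1 then Complex.exp (-Complex.I * (k : ℂ) * ((y 1 : ℝ) : ℂ))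
            else 0) * (if y 2 ∈ Set.Ioo (-1 : ℝ) 1 then 1 else 0) = 0 := by
        by_cases h0 : y 0 ∈ Set.Ioo (-1 : ℝ) 1 <;>
          by_cases h1 : y 1 ∈ Set.Ioo (-1 : ℝ) 1 <;>
          by_cases h2 : y 2 ∈ Set.Ioo (-1 : ℝ) 1 <;>
          simp [h0, h1, h2]
        exact absurd ⟨h0, h1, h2⟩ hC
      rw [this, add_zero, zero_smul]

lemma pt2 (k : ℝ) (y : R3) :
    Complex.exp (-Complex.I * (k : ℂ) * ((y 1 : ℝ) : ℂ)) • Jtwo y =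
      c2fun k y • cplx (EuclideanSpace.single 0 1) := by
  unfold Jtwo c2fun
  by_cases hP : y 0 ∈ Set.Ioo (-1 : ℝ) 1 ∧
      (y 1 ∈ Set.Ioc (-2 : ℝ) (-1) ∨ y 1 ∈ Set.Ico (1 : ℝ) 2) ∧ y 2 ∈ Set.Ioo (-1 : ℝ) 1
  · rw [if_pos hP, if_pos hP]
  · rw [if_neg hP, if_neg hP, smul_zero, zero_smul]

lemma f0_int : Integrable f0 := by
  have : f0 = (Set.Ioo (-1 : ℝ) 1).indicator (fun t => (t : ℂ)) := by
    funext t; simp [f0, Set.indicator_apply]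
  rw [this]
  exact (((Complex.continuous_ofReal).integrableOn_Icc.mono_set
    Set.Ioo_subset_Icc_self)).integrable_indicator measurableSet_Ioo

lemma f1_int (k : ℝ) : Integrable (f1 k) := by
  have : f1 k = (Set.Ioo (-1 : ℝ) 1).indicator
      (fun t => Complex.exp (-Complex.I * (k : ℂ) * (t : ℂ))) := by
    funext t; simp [f1, Set.indicator_apply]
  rw [this]
  refine (IntegrableOn.integrable_indicator ?_ measurableSet_Ioo)
  exact (Continuous.integrableOn_Icc (by continuity)).mono_set Set.Ioo_subset_Icc_self

lemma f2_int : Integrable f2 := by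
  have : f2 = (Set.Ioo (-1 : ℝ) 1).indicator (fun _ => (1 : ℂ)) := by
    funext t; simp [f2, Set.indicator_apply]
  rw [this]
  exact (continuous_const.integrableOn_Icc.mono_set
    Set.Ioo_subset_Icc_self).integrable_indicator measurableSet_Ioo

lemma f0_integral : (∫ t : ℝ, f0 t) = 0 := by
  have : f0 = (Set.Ioo (-1 : ℝ) 1).indicator (fun t => (t : ℂ)) := by
    funext t; simp [f0, Set.indicator_apply]
  rw [this, integral_indicator measurableSet_Ioo, ← integral_Ioc_eq_integral_Ioo,
    ← intervalIntegral.integral_of_le (by norm_num : (-1 : ℝ) ≤ 1),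
    intervalIntegral.integral_ofReal]
  norm_num

/-- the product function on the plain pi space -/
def Dfun (k : ℝ) : (Fin 3 → ℝ) → ℂ := fun x => ∏ i, ![f0, f1 k, f2] i (x i)

lemma dfun_eq (k : ℝ) :
    dfun k = Dfun k ∘ ((MeasurableEquiv.toLp 2 (Fin 3 → ℝ)).symm) := by
  funext y
  simp [dfun, Dfun, Fin.prod_univ_three]

lemma dfun_integrable (k : ℝ) : Integrable (dfun k) := by
  rw [dfun_eq]
  rw [(EuclideanSpace.volume_preserving_symm_measurableEquiv_toLp (Fin 3)).integrable_comp_emb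
    ((MeasurableEquiv.toLp 2 (Fin 3 → ℝ)).symm).measurableEmbedding]
  refine Integrable.fin_nat_prod fun i => ?_
  fin_cases i
  · exact f0_int
  · exact f1_int k
  · exact f2_int

lemma dfun_integral (k : ℝ) : (∫ y : R3, dfun k y) = 0 := by
  rw [dfun_eq]
  simp only [Function.comp_apply]
  rw [(EuclideanSpace.volume_preserving_symm_measurableEquiv_toLp (Fin 3)).integral_comp
    ((MeasurableEquiv.toLp 2 (Fin 3 → ℝ)).symm).measurableEmbedding]
  unfold Dfun
  rw [integral_fintype_prod_volume_eq_prod ![f0, f1 k, f2], Fin.prod_univ_three]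
  simp [f0_integral]

lemma key (k : ℝ) :
    (∫ y : R3, Complex.exp (-Complex.I * (k : ℂ) * ((y 1 : ℝ) : ℂ)) • Jone y) =
      ∫ y : R3, Complex.exp (-Complex.I * (k : ℂ) * ((y 1 : ℝ) : ℂ)) • Jtwo y := by
  have hadd : (∫ y : R3, (c2fun k y + dfun k y)) = ∫ y : R3, c2fun k y := by
    by_cases hc2 : Integrable (c2fun k)
    · rw [integral_add hc2 (dfun_integrable k), dfun_integral k, add_zero]
    · rw [integral_undef hc2, integral_undef]
      intro h
      have hs := h.sub (dfun_integrable k)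
      exact hc2 (by simpa [Pi.sub_def] using hs)
  calc (∫ y : R3, Complex.exp (-Complex.I * (k : ℂ) * ((y 1 : ℝ) : ℂ)) • Jone y)
      = ∫ y : R3, (c2fun k y + dfun k y) • cplx (EuclideanSpace.single 0 1) := by
        simp_rw [pt1]
    _ = (∫ y : R3, (c2fun k y + dfun k y)) • cplx (EuclideanSpace.single 0 1) :=
        integral_smul_const _ _
    _ = (∫ y : R3, c2fun k y) • cplx (EuclideanSpace.single 0 1) := by rw [hadd]
    _ = ∫ y : R3, c2fun k y • cplx (EuclideanSpace.single 0 1) :=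
        (integral_smul_const _ _).symm
    _ = _ := by simp_rw [pt2]

/-- Two different sources whose far field patterns at the observation direction
`x̂₀ = (0,1,0)ᵀ` coincide for all wavenumbers. -/
theorem farField_counterexample (ε μ : ℝ) (hε : 0 < ε) (hμ : 0 < μ) :
    (∀ k : ℝ, 0 < k →
      farField ε μ k Jone (EuclideanSpace.single 1 1) =
        farField ε μ k Jtwo (EuclideanSpace.single 1 1) ∧
      ∀ e : R3, ‖e‖ = 1 → (inner ℝ e (EuclideanSpace.single 1 1 : R3) : ℝ) = 0 →
        dotC e (farField ε μ k Jone (EuclideanSpace.single 1 1)) =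
          dotC e (farField ε μ k Jtwo (EuclideanSpace.single 1 1))) ∧
    Jone ≠ Jtwo := by
  constructor
  · intro k hk
    have hff : farField ε μ k Jone (EuclideanSpace.single 1 1) =
        farField ε μ k Jtwo (EuclideanSpace.single 1 1) := by
      unfold farField
      simp_rw [inner_single_one, key k]
    exact ⟨hff, fun e _ _ => by rw [hff]⟩
  · intro h
    have h0 := congrFun h (EuclideanSpace.single 0 (1 / 2 : ℝ))
    have e0 : (EuclideanSpace.single 0 (1 / 2 : ℝ) : R3) 0 = 1 / 2 := by
      simp [EuclideanSpace.single_apply]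
    have e1 : (EuclideanSpace.single 0 (1 / 2 : ℝ) : R3) 1 = 0 := by
      simp [EuclideanSpace.single_apply]
    have e2 : (EuclideanSpace.single 0 (1 / 2 : ℝ) : R3) 2 = 0 := by
      simp [EuclideanSpace.single_apply]
    simp only [Jone, Jtwo, e0, e1, e2] at h0
    norm_num at h0
    have h1 := congrArg (fun v : C3 => v 0) h0
    simp [cplx, EuclideanSpace.single_apply] at h1
end
end

section
/- Let z₁, z₂, z₃ ∈ ℂ be three pairwise distinct complex numbers that are not collinear, and let R > 0. Then there exists a constant c > 0, depending only on z₁, z₂, z₃ and R, such that for every ε > 0 and all z, zᵉ ∈ ℂ with |z| ≤ R, |zᵉ| ≤ R and | |zᵉ − z_j| − |z − z_j| | ≤ ε for j = 1, 2, 3, one has |zᵉ − z| ≤ c ε. That is, the reconstruction of a point from its distances to three non-collinear points is Lipschitz stable on bounded sets. -/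
lemma aux_normSq_diff_bound (z ze zj : ℂ) (R ε : ℝ) (hε : 0 ≤ ε)
    (hz : ‖z‖ ≤ R) (hze : ‖ze‖ ≤ R)
    (h : |‖ze - zj‖ - ‖z - zj‖| ≤ ε) :
    |Complex.normSq (ze - zj) - Complex.normSq (z - zj)| ≤ ε * (2*R + 2*‖zj‖) := by
  have hx : ‖ze - zj‖ ≤ R + ‖zj‖ := by
    calc ‖ze - zj‖ ≤ ‖ze‖ + ‖zj‖ := by
          simpa [sub_eq_add_neg] using norm_add_le ze (-zj)
      _ ≤ R + ‖zj‖ := by linarith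
  have hy : ‖z - zj‖ ≤ R + ‖zj‖ := by
    calc ‖z - zj‖ ≤ ‖z‖ + ‖zj‖ := by
          simpa [sub_eq_add_neg] using norm_add_le z (-zj)
      _ ≤ R + ‖zj‖ := by linarith
  have hx0 : 0 ≤ ‖ze - zj‖ := norm_nonneg _
  have hy0 : 0 ≤ ‖z - zj‖ := norm_nonneg _
  obtain ⟨h1, h2⟩ := abs_le.mp h
  rw [← Complex.sq_norm, ← Complex.sq_norm, abs_le]
  constructor <;> nlinarith

lemma aux_det_ne_zero (a b : ℂ) (hind : LinearIndependent ℝ ![a, b]) :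
    a.re * b.im - a.im * b.re ≠ 0 := by
  rw [LinearIndependent.pair_iff] at hind
  intro hD
  have h1 := hind b.im (-a.im) (by
    apply Complex.ext <;>
      simp [Complex.real_smul, Complex.add_re, Complex.add_im, Complex.mul_re, Complex.mul_im] <;>
      linarith)
  have h2 := hind b.re (-a.re) (by
    apply Complex.ext <;>
      simp [Complex.real_smul, Complex.add_re, Complex.add_im, Complex.mul_re, Complex.mul_im] <;>
      nlinarith [h1.1, h1.2])
  have ha : a = 0 := by
    apply Complex.ext <;> simp
    · linarith [neg_eq_zero.mp h2.2]
    · linarith [neg_eq_zero.mp h1.2]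
  have := hind 1 0 (by simp [ha])
  exact one_ne_zero this.1

lemma aux_uv_bound (u R e A1 A2 A3 P1 P2 : ℝ) (he : 0 ≤ e) (hA3 : 0 ≤ A3)
    (h1 : |P1| ≤ e * (2*R + 2*A1)) (h2 : |P2| ≤ e * (2*R + 2*A2))
    (hid : 2 * u = P1 - P2) :
    |u| ≤ (2*R + A1 + A2 + A3) * e := by
  obtain ⟨p1, q1⟩ := abs_le.mp h1
  obtain ⟨p2, q2⟩ := abs_le.mp h2
  rw [abs_le]
  constructor <;> nlinarith [mul_nonneg he hA3]

lemma aux_prod_bound (u v Bi Ai Ke : ℝ) (hu : |u| ≤ Ke) (hv : |v| ≤ Ke) :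
    |u * Bi - v * Ai| ≤ Ke * (|Bi| + |Ai|) := by
  calc |u * Bi - v * Ai| ≤ |u * Bi| + |v * Ai| := abs_sub _ _
    _ = |u| * |Bi| + |v| * |Ai| := by rw [abs_mul, abs_mul]
    _ ≤ Ke * (|Bi| + |Ai|) := by
        nlinarith [abs_nonneg u, abs_nonneg v, abs_nonneg Bi, abs_nonneg Ai]

/-- Lipschitz stability on bounded sets of the reconstruction of a point of the plane
from its distances to three pairwise distinct, non-collinear points. -/
theorem point_stability_from_three_distances (z₁ z₂ z₃ : ℂ)
    (h12 : z₁ ≠ z₂) (h13 : z₁ ≠ z₃) (h23 : z₂ ≠ z₃)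
    (hind : LinearIndependent ℝ ![z₂ - z₁, z₃ - z₁])
    (R : ℝ) (hR : 0 < R) :
    ∃ c : ℝ, 0 < c ∧ ∀ ε : ℝ, 0 < ε → ∀ z ze : ℂ,
      ‖z‖ ≤ R → ‖ze‖ ≤ R →
      |‖ze - z₁‖ - ‖z - z₁‖| ≤ ε →
      |‖ze - z₂‖ - ‖z - z₂‖| ≤ ε →
      |‖ze - z₃‖ - ‖z - z₃‖| ≤ ε →
      ‖ze - z‖ ≤ c * ε := by
  have hD0 : (z₂ - z₁).re * (z₃ - z₁).im - (z₂ - z₁).im * (z₃ - z₁).re ≠ 0 :=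
    aux_det_ne_zero _ _ hind
  set a : ℂ := z₂ - z₁ with ha_def
  set b : ℂ := z₃ - z₁ with hb_def
  set D : ℝ := a.re * b.im - a.im * b.re with hD_def
  have hDpos : 0 < |D| := abs_pos.mpr hD0
  set K : ℝ := 2*R + ‖z₁‖ + ‖z₂‖ + ‖z₃‖ with hK_def
  have hKpos : 0 < K := by
    have := norm_nonneg z₁; have := norm_nonneg z₂; have := norm_nonneg z₃
    rw [hK_def]; positivity
  set S : ℝ := |a.re| + |a.im| + |b.re| + |b.im| with hS_def
  have hSpos : 0 < S := by
    have ha0 : a ≠ 0 := sub_ne_zero.mpr (Ne.symm h12)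
    have h' : a.re ≠ 0 ∨ a.im ≠ 0 := by
      by_contra hc
      push_neg at hc
      exact ha0 (Complex.ext hc.1 hc.2)
    have h1 := abs_nonneg a.re; have h2 := abs_nonneg a.im
    have h3 := abs_nonneg b.re; have h4 := abs_nonneg b.im
    rcases h' with h | h
    · have := abs_pos.mpr h; rw [hS_def]; linarith
    · have := abs_pos.mpr h; rw [hS_def]; linarith
  refine ⟨K * S / |D|, by positivity, ?_⟩
  intro ε hε z ze hz hze h1 h2 h3
  set w : ℂ := ze - z with hw_def
  set u : ℝ := a.re * w.re + a.im * w.im with hu_def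
  set v : ℝ := b.re * w.re + b.im * w.im with hv_def
  have hb1 := aux_normSq_diff_bound z ze z₁ R ε hε.le hz hze h1
  have hb2 := aux_normSq_diff_bound z ze z₂ R ε hε.le hz hze h2
  have hb3 := aux_normSq_diff_bound z ze z₃ R ε hε.le hz hze h3
  have hidu : 2 * u = (Complex.normSq (ze - z₁) - Complex.normSq (z - z₁))
      - (Complex.normSq (ze - z₂) - Complex.normSq (z - z₂)) := by
    rw [hu_def, ha_def, hw_def]
    simp only [Complex.normSq_apply, Complex.sub_re, Complex.sub_im]
    ring
  have hidv : 2 * v = (Complex.normSq (ze - z₁) - Complex.normSq (z - z₁))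
      - (Complex.normSq (ze - z₃) - Complex.normSq (z - z₃)) := by
    rw [hv_def, hb_def, hw_def]
    simp only [Complex.normSq_apply, Complex.sub_re, Complex.sub_im]
    ring
  have hu_bound : |u| ≤ K * ε := by
    have H := aux_uv_bound u R ε (‖z₁‖) (‖z₂‖) (‖z₃‖)
      _ _ hε.le (norm_nonneg z₃) hb1 hb2 hidu
    calc |u| ≤ (2*R + ‖z₁‖ + ‖z₂‖ + ‖z₃‖) * ε := H
      _ = K * ε := by rw [hK_def]; try ring
  have hv_bound : |v| ≤ K * ε := by
    have H := aux_uv_bound v R ε (‖z₁‖) (‖z₃‖) (‖z₂‖)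
      _ _ hε.le (norm_nonneg z₂) hb1 hb3 hidv
    calc |v| ≤ (2*R + ‖z₁‖ + ‖z₃‖ + ‖z₂‖) * ε := H
      _ = K * ε := by rw [hK_def]; try ring
  have hre : D * w.re = u * b.im - v * a.im := by rw [hu_def, hv_def, hD_def]; ring
  have him : D * w.im = v * a.re - u * b.re := by rw [hu_def, hv_def, hD_def]; ring
  have hre' : |D| * |w.re| ≤ K * ε * (|b.im| + |a.im|) := by
    rw [← abs_mul, hre]
    exact aux_prod_bound u v b.im a.im (K*ε) hu_bound hv_bound
  have him' : |D| * |w.im| ≤ K * ε * (|a.re| + |b.re|) := by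
    rw [← abs_mul, him]
    exact aux_prod_bound v u a.re b.re (K*ε) hv_bound hu_bound
  have habs : ‖w‖ ≤ |w.re| + |w.im| := Complex.norm_le_abs_re_add_abs_im w
  rw [div_mul_eq_mul_div, le_div_iff₀ hDpos]
  calc ‖w‖ * |D| ≤ (|w.re| + |w.im|) * |D| :=
        mul_le_mul_of_nonneg_right habs hDpos.le
    _ = |D| * |w.re| + |D| * |w.im| := by ring
    _ ≤ K * ε * (|b.im| + |a.im|) + K * ε * (|a.re| + |b.re|) := by linarith
    _ = K * S * ε := by rw [hS_def]; ring
end
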